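/- Fix n ≥ 1, a directed graph G = (V, E) on the node set V = {x_1, …, x_n}, a monoid (M, ⊗, 1̄), and edge weights wt(x_i, x_j) ∈ M for each edge (x_i, x_j) ∈ E, and let G' be the weighted directed graph of the construction described in the context. Then for every pair of nodes x_i, x_j ∈ V and every z ∈ M: there exists a path P from x_i to x_j in G with ⊗(P) = z if and only if there exists a path P' from ⟨x_i, x_i⟩ to ⟨x_j, x_j⟩ in G' with ⊗(P') = z. -/

import Mathlib

/-- A path from `u` to `v` in the directed graph with edge relation `E`. -/
def IsPath {V : Type*} (E : V → V → Prop) (u v : V) (l : List V) : Prop :=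
  l ≠ [] ∧ l.head? = some u ∧ l.getLast? = some v ∧ l.Chain' E

/-- The weight of a path: the ordered product of the weights of its edges,
`1` for a 0-length path. -/
def pathWeight {V M : Type*} [Monoid M] (wt : V → V → M) (l : List V) : M :=
  ((l.zip l.tail).map fun p => wt p.1 p.2).prod

/-- Nodes of the graph G'': `Sum.inl i` is x_{i+1}, `Sum.inr i` is y_{i+1}. -/
abbrev DoubleV (n : ℕ) := Fin n ⊕ Fin n

/-- Nodes of the product graph G': pairs of nodes of G''. -/
abbrev ProdV (n : ℕ) := DoubleV n × DoubleV n

/-- The edge relation of the product graph G' of the construction: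
black edges ⟨x_i,y_j⟩ ↔ ⟨x_i,y_{j±1}⟩ and ⟨y_i,x_j⟩ ↔ ⟨y_{i±1},x_j⟩;
blue edges ⟨x_i,x_i⟩ → ⟨x_i,y_i⟩ and ⟨y_i,x_i⟩ → ⟨x_i,x_i⟩;
red edges ⟨x_i,y_j⟩ → ⟨x_i,x_j⟩ for (x_i,x_j) ∈ E;
green edges ⟨x_i,x_j⟩ → ⟨y_i,x_j⟩ for i ≠ j. -/
def prodE {n : ℕ} (E : Fin n → Fin n → Prop) : ProdV n → ProdV n → Prop :=
  fun a b =>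
    match a, b with
    | (Sum.inl i, Sum.inr j), (Sum.inl i', Sum.inr j') =>
        i = i' ∧ ((j : ℕ) + 1 = (j' : ℕ) ∨ (j' : ℕ) + 1 = (j : ℕ))   -- black
    | (Sum.inr i, Sum.inl j), (Sum.inr i', Sum.inl j') =>
        j = j' ∧ ((i : ℕ) + 1 = (i' : ℕ) ∨ (i' : ℕ) + 1 = (i : ℕ))   -- black
    | (Sum.inl i, Sum.inl j), (Sum.inl i', Sum.inr j') =>
        i = j ∧ i' = i ∧ j' = i                                       -- blue
    | (Sum.inr i, Sum.inl j), (Sum.inl i', Sum.inl j') =>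
        i = j ∧ i' = i ∧ j' = i                                       -- blue
    | (Sum.inl i, Sum.inr j), (Sum.inl i', Sum.inl j') =>
        E i j ∧ i' = i ∧ j' = j                                       -- red
    | (Sum.inl i, Sum.inl j), (Sum.inr i', Sum.inl j') =>
        i ≠ j ∧ i' = i ∧ j' = j                                       -- green
    | _, _ => False

/-- The weight function of the product graph G': the red edge ⟨x_i,y_j⟩ → ⟨x_i,x_j⟩ has
weight wt(x_i, x_j); every other edge has weight 1̄. -/
def prodWt {n : ℕ} {M : Type*} [Monoid M] (wt : Fin n → Fin n → M) :
    ProdV n → ProdV n → M :=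
  fun a b =>
    match a, b with
    | (Sum.inl i, Sum.inr _), (Sum.inl _, Sum.inl j) => wt i j
    | _, _ => 1

/-- A weighted walk relation: `Walk E wt u v z` iff there is a path from `u` to `v`
whose weight is `z`. -/
inductive Walk {V : Type*} {M : Type*} [Monoid M] (E : V → V → Prop) (wt : V → V → M) :
    V → V → M → Prop
  | nil (u : V) : Walk E wt u u 1
  | cons {u v w : V} {z : M} : E u v → Walk E wt v w z → Walk E wt u w (wt u v * z)

lemma Walk.trans {V M : Type*} [Monoid M] {E : V → V → Prop} {wt : V → V → M}
    {u v w : V} {z1 z2 : M} (h1 : Walk E wt u v z1) :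
    Walk E wt v w z2 → Walk E wt u w (z1 * z2) := by
  induction h1 with
  | nil u => intro h2; rwa [one_mul]
  | cons he _ ih => intro h2; rw [mul_assoc]; exact Walk.cons he (ih h2)

lemma Walk.cons_one {V M : Type*} [Monoid M] {E : V → V → Prop} {wt : V → V → M}
    {u v w : V} {z : M} (he : E u v) (h1 : wt u v = 1) (hw : Walk E wt v w z) :
    Walk E wt u w z := by
  have := Walk.cons he hw
  rwa [h1, one_mul] at this

lemma pathWeight_cons_cons {V M : Type*} [Monoid M] (wt : V → V → M) (a b : V)
    (t : List V) : pathWeight wt (a :: b :: t) = wt a b * pathWeight wt (b :: t) := by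
  simp [pathWeight]

lemma walk_of_path {V M : Type*} [Monoid M] {E : V → V → Prop} {wt : V → V → M} :
    ∀ (l : List V) (u v : V), IsPath E u v l → Walk E wt u v (pathWeight wt l)
  | [], u, v, h => absurd rfl h.1
  | [a], u, v, h => by
      obtain ⟨-, hh, hl, -⟩ := h
      have hu : a = u := by simpa using hh
      have hv : a = v := by simpa using hl
      rw [← hu, ← hv, show pathWeight wt [a] = 1 by simp [pathWeight]]
      exact .nil _
  | a :: b :: t, u, v, h => by
      obtain ⟨-, hh, hl, hc⟩ := h
      have hu : a = u := by simpa using hh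
      subst hu
      rw [List.Chain', List.isChain_cons_cons] at hc
      have ih := walk_of_path (E := E) (wt := wt) (b :: t) b v
        ⟨by simp, rfl, by rwa [List.getLast?_cons_cons] at hl, hc.2⟩
      rw [pathWeight_cons_cons]
      exact Walk.cons hc.1 ih

lemma path_of_walk {V M : Type*} [Monoid M] {E : V → V → Prop} {wt : V → V → M}
    {u v : V} {z : M} (h : Walk E wt u v z) :
    ∃ l, IsPath E u v l ∧ pathWeight wt l = z := by
  induction h with
  | nil u => exact ⟨[u], ⟨by simp, rfl, rfl, List.isChain_singleton u⟩, by simp [pathWeight]⟩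
  | @cons u a w z he hw ih =>
    obtain ⟨l, ⟨hne, hh, hl, hc⟩, hz⟩ := ih
    obtain ⟨b, t, rfl⟩ : ∃ b t, l = b :: t := by
      cases l with
      | nil => exact absurd rfl hne
      | cons b t => exact ⟨b, t, rfl⟩
    have hb : b = a := by simpa using hh
    subst hb
    exact ⟨u :: b :: t,
      ⟨by simp, rfl, by rwa [List.getLast?_cons_cons], List.isChain_cons_cons.mpr ⟨he, hc⟩⟩,
      by rw [pathWeight_cons_cons, hz]⟩

lemma walk_iff {V M : Type*} [Monoid M] (E : V → V → Prop) (wt : V → V → M)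
    (u v : V) (z : M) :
    (∃ l, IsPath E u v l ∧ pathWeight wt l = z) ↔ Walk E wt u v z := by
  constructor
  · rintro ⟨l, hp, rfl⟩; exact walk_of_path l u v hp
  · exact path_of_walk

lemma blackWalkX {n : ℕ} {M : Type*} [Monoid M] (E : Fin n → Fin n → Prop)
    (wt : Fin n → Fin n → M) (a : Fin n) (k : ℕ) :
    ∀ p q : Fin n, ((p : ℕ) + k = (q : ℕ) ∨ (q : ℕ) + k = (p : ℕ)) →
      Walk (prodE E) (prodWt wt) (Sum.inl a, Sum.inr p) (Sum.inl a, Sum.inr q) 1 := by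
  induction k with
  | zero =>
    intro p q h
    have : p = q := Fin.ext (by omega)
    subst this; exact .nil _
  | succ k ih =>
    intro p q h
    rcases h with h | h
    · have hlt : (p : ℕ) + 1 < n := by have := q.isLt; omega
      refine Walk.cons_one (v := (Sum.inl a, Sum.inr ⟨(p : ℕ) + 1, hlt⟩))
        ⟨rfl, Or.inl rfl⟩ rfl ?_
      exact ih _ q (Or.inl (by show (p : ℕ) + 1 + k = (q : ℕ); omega))
    · have hq : (q : ℕ) + k < n := by have := p.isLt; omega
      refine Walk.cons_one (v := (Sum.inl a, Sum.inr ⟨(q : ℕ) + k, hq⟩))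
        ⟨rfl, Or.inr (by show (q : ℕ) + k + 1 = (p : ℕ); omega)⟩ rfl ?_
      exact ih _ q (Or.inr (by show (q : ℕ) + k = (q : ℕ) + k; rfl))

lemma blackWalkY {n : ℕ} {M : Type*} [Monoid M] (E : Fin n → Fin n → Prop)
    (wt : Fin n → Fin n → M) (b : Fin n) (k : ℕ) :
    ∀ p q : Fin n, ((p : ℕ) + k = (q : ℕ) ∨ (q : ℕ) + k = (p : ℕ)) →
      Walk (prodE E) (prodWt wt) (Sum.inr p, Sum.inl b) (Sum.inr q, Sum.inl b) 1 := by
  induction k with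
  | zero =>
    intro p q h
    have : p = q := Fin.ext (by omega)
    subst this; exact .nil _
  | succ k ih =>
    intro p q h
    rcases h with h | h
    · have hlt : (p : ℕ) + 1 < n := by have := q.isLt; omega
      refine Walk.cons_one (v := (Sum.inr ⟨(p : ℕ) + 1, hlt⟩, Sum.inl b))
        ⟨rfl, Or.inl rfl⟩ rfl ?_
      exact ih _ q (Or.inl (by show (p : ℕ) + 1 + k = (q : ℕ); omega))
    · have hq : (q : ℕ) + k < n := by have := p.isLt; omega
      refine Walk.cons_one (v := (Sum.inr ⟨(q : ℕ) + k, hq⟩, Sum.inl b))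
        ⟨rfl, Or.inr (by show (q : ℕ) + k + 1 = (p : ℕ); omega)⟩ rfl ?_
      exact ih _ q (Or.inr rfl)

lemma blackWalkX' {n : ℕ} {M : Type*} [Monoid M] (E : Fin n → Fin n → Prop)
    (wt : Fin n → Fin n → M) (a p q : Fin n) :
    Walk (prodE E) (prodWt wt) (Sum.inl a, Sum.inr p) (Sum.inl a, Sum.inr q) 1 := by
  rcases le_total (p : ℕ) (q : ℕ) with h | h
  · exact blackWalkX E wt a ((q : ℕ) - (p : ℕ)) p q (Or.inl (by omega))
  · exact blackWalkX E wt a ((p : ℕ) - (q : ℕ)) p q (Or.inr (by omega))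

lemma blackWalkY' {n : ℕ} {M : Type*} [Monoid M] (E : Fin n → Fin n → Prop)
    (wt : Fin n → Fin n → M) (b p q : Fin n) :
    Walk (prodE E) (prodWt wt) (Sum.inr p, Sum.inl b) (Sum.inr q, Sum.inl b) 1 := by
  rcases le_total (p : ℕ) (q : ℕ) with h | h
  · exact blackWalkY E wt b ((q : ℕ) - (p : ℕ)) p q (Or.inl (by omega))
  · exact blackWalkY E wt b ((p : ℕ) - (q : ℕ)) p q (Or.inr (by omega))

lemma segWalk {n : ℕ} {M : Type*} [Monoid M] (E : Fin n → Fin n → Prop)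
    (wt : Fin n → Fin n → M) {a b : Fin n} (hE : E a b) :
    Walk (prodE E) (prodWt wt) (Sum.inl a, Sum.inl a) (Sum.inl b, Sum.inl b) (wt a b) := by
  -- end piece: from ⟨x_a, x_b⟩ to ⟨x_b, x_b⟩, weight 1
  have h3 : Walk (prodE E) (prodWt wt) (Sum.inl a, Sum.inl b) (Sum.inl b, Sum.inl b) 1 := by
    by_cases hab : a = b
    · subst hab; exact .nil _
    · refine Walk.cons_one (v := (Sum.inr a, Sum.inl b)) ⟨hab, rfl, rfl⟩ rfl ?_
      have hmid := blackWalkY' E wt b a b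
      have hend : Walk (prodE E) (prodWt wt) (Sum.inr b, Sum.inl b) (Sum.inl b, Sum.inl b) 1 :=
        Walk.cons_one (v := (Sum.inl b, Sum.inl b)) ⟨rfl, rfl, rfl⟩ rfl (.nil _)
      have := hmid.trans hend
      rwa [one_mul] at this
  -- red step: from ⟨x_a, y_b⟩ to ⟨x_a, x_b⟩, weight wt a b
  have h2 : Walk (prodE E) (prodWt wt) (Sum.inl a, Sum.inr b) (Sum.inl b, Sum.inl b)
      (wt a b * 1) := Walk.cons ⟨hE, rfl, rfl⟩ h3
  rw [mul_one] at h2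
  -- blue step and black moves
  refine Walk.cons_one (v := (Sum.inl a, Sum.inr a)) ⟨rfl, rfl, rfl⟩ rfl ?_
  have := (blackWalkX' E wt a a b).trans h2
  rwa [one_mul] at this

lemma fwdWalk {n : ℕ} {M : Type*} [Monoid M] {E : Fin n → Fin n → Prop}
    {wt : Fin n → Fin n → M} {i j : Fin n} {z : M} (h : Walk E wt i j z) :
    Walk (prodE E) (prodWt wt) (Sum.inl i, Sum.inl i) (Sum.inl j, Sum.inl j) z := by
  induction h with
  | nil u => exact .nil _
  | cons he _ ih => exact (segWalk _ _ he).trans ih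

/-- Projection from G' to G used in the backward direction. -/
def phi {n : ℕ} : ProdV n → Fin n
  | (Sum.inl _, Sum.inl b) => b
  | (Sum.inl a, Sum.inr _) => a
  | (Sum.inr _, Sum.inl b) => b
  | (Sum.inr a, Sum.inr _) => a

lemma bwdWalk {n : ℕ} {M : Type*} [Monoid M] {E : Fin n → Fin n → Prop}
    {wt : Fin n → Fin n → M} {u v : ProdV n} {z : M}
    (h : Walk (prodE E) (prodWt wt) u v z) : Walk E wt (phi u) (phi v) z := by
  induction h with
  | nil u => exact .nil _
  | @cons u v w z he hw ih =>
    obtain ⟨a | a, b | b⟩ := u <;> obtain ⟨c | c, d | d⟩ := v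
    · exact he.elim
    · -- blue1
      obtain ⟨h1, h2, h3⟩ := he
      subst h1; subst h2; subst h3
      show Walk E wt _ (phi w) (1 * z)
      rw [one_mul]; exact ih
    · -- green
      obtain ⟨h1, h2, h3⟩ := he
      subst h2; subst h3
      show Walk E wt _ (phi w) (1 * z)
      rw [one_mul]; exact ih
    · exact he.elim
    · -- red
      obtain ⟨h1, h2, h3⟩ := he
      subst h2; subst h3
      exact Walk.cons h1 ih
    · -- black1
      obtain ⟨h1, h2⟩ := he
      subst h1
      show Walk E wt _ (phi w) (1 * z)
      rw [one_mul]; exact ih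
    · exact he.elim
    · exact he.elim
    · -- blue2
      obtain ⟨h1, h2, h3⟩ := he
      subst h1; subst h2; subst h3
      show Walk E wt _ (phi w) (1 * z)
      rw [one_mul]; exact ih
    · exact he.elim
    · -- black2
      obtain ⟨h1, h2⟩ := he
      subst h1
      show Walk E wt _ (phi w) (1 * z)
      rw [one_mul]; exact ih
    · exact he.elim
    · exact he.elim
    · exact he.elim
    · exact he.elim
    · exact he.elim

/-- For every pair of nodes x_i, x_j of G and every z ∈ M: there is a path
P from x_i to x_j in G with ⊗(P) = z iff there is a path P' from ⟨x_i, x_i⟩ to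
⟨x_j, x_j⟩ in G' with ⊗(P') = z. -/
theorem stmt_14 {M : Type*} [Monoid M] (n : ℕ) (hn : 1 ≤ n)
    (E : Fin n → Fin n → Prop) (wt : Fin n → Fin n → M) (i j : Fin n) (z : M) :
    (∃ l : List (Fin n), IsPath E i j l ∧ pathWeight wt l = z) ↔
    (∃ l' : List (ProdV n),
        IsPath (prodE E) (Sum.inl i, Sum.inl i) (Sum.inl j, Sum.inl j) l' ∧
        pathWeight (prodWt wt) l' = z) := by
  rw [walk_iff, walk_iff]
  constructor
  · exact fwdWalk
  · intro h
    exact bwdWalk h
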